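/- Let H(q) = q⁵ ∏_{m≥1} (1-q^{2m})(1-q^{11m})^{13} / ((1-q^m)^3 (1-q^{22m})) as a formal power series over ℤ. Then U₁₁ H = q · (∑_{n≥0} Δ₅(11n+6) q^n) · ∏_{m≥1} (1-q^m)^{12}, as an exact identity of formal power series over ℤ. -/

import Mathlib

open PowerSeries

/-- The infinite product `∏_{m ≥ 1} f m` of formal power series, for families with
`f m = 1 + O(q^m)` (as is the case for all factors of the form `(1 - q^{k·m})^e`):
its `n`-th coefficient is the `n`-th coefficient of the partial product `∏_{m=1}^{n} f m`,
since all further factors are `1 + O(q^{m})` with `m > n`. -/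
noncomputable def prodQ (f : ℕ → PowerSeries ℤ) : PowerSeries ℤ :=
  PowerSeries.mk fun n => PowerSeries.coeff n (∏ m ∈ Finset.range n, f (m + 1))

namespace BrokenDiamondAux

/-- A family is *good* if its `m+1`-st member is `1 + O(q^{m+1})`. -/
def Good (f : ℕ → PowerSeries ℤ) : Prop :=
  ∀ m : ℕ, (X : PowerSeries ℤ) ^ (m + 1) ∣ f (m + 1) - 1

lemma coeff_eq_of_X_pow_dvd {P Q : PowerSeries ℤ} {n : ℕ}
    (h : (X : PowerSeries ℤ) ^ (n + 1) ∣ P - Q) :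
    PowerSeries.coeff n P = PowerSeries.coeff n Q := by
  rw [X_pow_dvd_iff] at h
  have := h n (lt_add_one n)
  rw [map_sub, sub_eq_zero] at this
  exact this

lemma prod_sub_one_dvd {s : Finset ℕ} {g : ℕ → PowerSeries ℤ} {n : ℕ}
    (h : ∀ m ∈ s, (X : PowerSeries ℤ) ^ n ∣ g m - 1) :
    (X : PowerSeries ℤ) ^ n ∣ (∏ m ∈ s, g m) - 1 := by
  classical
  induction s using Finset.induction with
  | empty => simp
  | insert a s hx ih =>
    rw [Finset.prod_insert hx]
    have key : g a * (∏ m ∈ s, g m) - 1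
        = g a * ((∏ m ∈ s, g m) - 1) + (g a - 1) := by ring
    rw [key]
    exact dvd_add (Dvd.dvd.mul_left (ih fun m hm => h m (Finset.mem_insert_of_mem hm)) _)
      (h a (Finset.mem_insert_self a s))

lemma coeff_prod_range {f : ℕ → PowerSeries ℤ} (hf : Good f) {n N : ℕ} (hn : n ≤ N) :
    PowerSeries.coeff n (∏ m ∈ Finset.range N, f (m + 1))
      = PowerSeries.coeff n (prodQ f) := by
  rw [prodQ, PowerSeries.coeff_mk]
  have hsplit : (∏ m ∈ Finset.range n, f (m + 1)) * (∏ m ∈ Finset.Ico n N, f (m + 1))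
      = ∏ m ∈ Finset.range N, f (m + 1) := by
    rw [Finset.range_eq_Ico, Finset.range_eq_Ico]
    exact Finset.prod_Ico_consecutive (fun m => f (m + 1)) (Nat.zero_le n) hn
  rw [← hsplit]
  apply coeff_eq_of_X_pow_dvd
  have h1 : (X : PowerSeries ℤ) ^ (n + 1) ∣ (∏ m ∈ Finset.Ico n N, f (m + 1)) - 1 := by
    apply prod_sub_one_dvd
    intro m hm
    rw [Finset.mem_Ico] at hm
    exact (pow_dvd_pow (X : PowerSeries ℤ) (by omega)).trans (hf m)
  have key : (∏ m ∈ Finset.range n, f (m + 1)) * (∏ m ∈ Finset.Ico n N, f (m + 1))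
      - (∏ m ∈ Finset.range n, f (m + 1))
      = (∏ m ∈ Finset.range n, f (m + 1)) * ((∏ m ∈ Finset.Ico n N, f (m + 1)) - 1) := by ring
  rw [key]
  exact h1.mul_left _

lemma prodQ_mul {f g : ℕ → PowerSeries ℤ} (hf : Good f) (hg : Good g) :
    prodQ (fun m => f m * g m) = prodQ f * prodQ g := by
  ext n
  rw [prodQ, PowerSeries.coeff_mk, Finset.prod_mul_distrib, PowerSeries.coeff_mul,
    PowerSeries.coeff_mul]
  apply Finset.sum_congr rfl
  intro p hp
  rw [Finset.HasAntidiagonal.mem_antidiagonal] at hp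
  rw [coeff_prod_range hf (show p.1 ≤ n by omega), coeff_prod_range hg (show p.2 ≤ n by omega)]

lemma good_mul {f g : ℕ → PowerSeries ℤ} (hf : Good f) (hg : Good g) :
    Good (fun m => f m * g m) := by
  intro m
  have key : f (m + 1) * g (m + 1) - 1
      = f (m + 1) * (g (m + 1) - 1) + (f (m + 1) - 1) := by ring
  rw [key]
  exact dvd_add ((hg m).mul_left _) (hf m)

lemma good_pow (a e : ℕ) (ha : 1 ≤ a) :
    Good (fun m => ((1 : PowerSeries ℤ) - X ^ (a * m)) ^ e) := by
  intro m
  have h1 : (X : PowerSeries ℤ) ^ (m + 1) ∣ ((1 : PowerSeries ℤ) - X ^ (a * (m + 1))) - 1 := by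
    have : ((1 : PowerSeries ℤ) - X ^ (a * (m + 1))) - 1 = -(X ^ (a * (m + 1))) := by ring
    rw [this]
    exact dvd_neg.mpr (pow_dvd_pow _ (by nlinarith))
  have h2 := sub_dvd_pow_sub_pow ((1 : PowerSeries ℤ) - X ^ (a * (m + 1))) 1 e
  rw [show ((1 : PowerSeries ℤ) - X ^ (a * (m + 1))) - 1 = -(X ^ (a * (m + 1))) from by ring,
    one_pow, neg_dvd] at h2
  exact (pow_dvd_pow (X : PowerSeries ℤ) (by nlinarith)).trans h2

lemma good_one_sub (a : ℕ) (ha : 1 ≤ a) :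
    Good (fun m => (1 : PowerSeries ℤ) - X ^ (a * m)) := by
  simpa [pow_one] using good_pow a 1 ha

lemma good_pow' (e : ℕ) : Good (fun m => ((1 : PowerSeries ℤ) - X ^ m) ^ e) := by
  have := good_pow 1 e le_rfl
  simpa [one_mul] using this

lemma constantCoeff_prodQ (f : ℕ → PowerSeries ℤ) :
    PowerSeries.coeff 0 (prodQ f) = 1 := by
  rw [prodQ, PowerSeries.coeff_mk]
  simp

/-- The key `U₁₁`-identity: extracting coefficients `11n` from `F · G(q¹¹)` gives
`(U₁₁ F) · G`. -/
lemma key (F G : PowerSeries ℤ) :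
    PowerSeries.mk (fun n => PowerSeries.coeff (11 * n)
        (F * PowerSeries.mk (fun k => if 11 ∣ k then PowerSeries.coeff (k / 11) G else 0)))
      = PowerSeries.mk (fun n => PowerSeries.coeff (11 * n) F) * G := by
  ext n
  rw [PowerSeries.coeff_mk, PowerSeries.coeff_mul, PowerSeries.coeff_mul,
    Finset.Nat.sum_antidiagonal_eq_sum_range_succ_mk,
    Finset.Nat.sum_antidiagonal_eq_sum_range_succ_mk]
  simp only [PowerSeries.coeff_mk]
  -- LHS : ∑ k in range (11n+1), coeff k F * (if 11 ∣ 11n - k then coeff ((11n-k)/11) G else 0)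
  -- RHS : ∑ k in range (n+1), coeff (11k) F * coeff (n-k) G
  have hsub : (Finset.range (n + 1)).image (fun j => 11 * j) ⊆ Finset.range (11 * n + 1) := by
    intro x hx
    simp only [Finset.mem_image, Finset.mem_range] at hx ⊢
    obtain ⟨j, hj, rfl⟩ := hx
    omega
  rw [← Finset.sum_subset hsub]
  · rw [Finset.sum_image (by intro a _ b _ h; simp only at h; omega)]
    apply Finset.sum_congr rfl
    intro j hj
    rw [Finset.mem_range] at hj
    have h11 : 11 ∣ 11 * n - 11 * j := ⟨n - j, by omega⟩
    rw [if_pos h11, show (11 * n - 11 * j) / 11 = n - j by omega]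
  · intro x hx hxs
    rw [Finset.mem_range] at hx
    simp only [Finset.mem_image, Finset.mem_range] at hxs
    have : ¬ (11 ∣ 11 * n - x) := by
      intro hdvd
      have hx11 : 11 ∣ x := by omega
      obtain ⟨j, rfl⟩ := hx11
      exact hxs ⟨j, by omega, rfl⟩
    rw [if_neg this, mul_zero]

/-- `∏ (1 - q^{11m})^{12}` is the dilation by 11 of `∏ (1 - q^m)^{12}`. -/
lemma dil_eq :
    prodQ (fun m => ((1 : PowerSeries ℤ) - X ^ (11 * m)) ^ 12)
      = PowerSeries.mk (fun k => if 11 ∣ k then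
          PowerSeries.coeff (k / 11) (prodQ (fun m => ((1 : PowerSeries ℤ) - X ^ m) ^ 12))
          else 0) := by
  ext k
  rw [PowerSeries.coeff_mk]
  have hpoly : ∀ N : ℕ, (∏ m ∈ Finset.range N, ((1 : PowerSeries ℤ) - X ^ (m + 1)) ^ 12)
      = ((∏ m ∈ Finset.range N, ((1 : Polynomial ℤ) - Polynomial.X ^ (m + 1)) ^ 12 :
          Polynomial ℤ) : PowerSeries ℤ) := by
    intro N
    rw [← Polynomial.coeToPowerSeries.ringHom_apply, map_prod]
    apply Finset.prod_congr rfl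
    intro m _
    simp
  have hpoly2 : ∀ N : ℕ, (∏ m ∈ Finset.range N, ((1 : PowerSeries ℤ) - X ^ (11 * (m + 1))) ^ 12)
      = (((Polynomial.expand ℤ 11)
            (∏ m ∈ Finset.range N, ((1 : Polynomial ℤ) - Polynomial.X ^ (m + 1)) ^ 12) :
          Polynomial ℤ) : PowerSeries ℤ) := by
    intro N
    rw [map_prod, ← Polynomial.coeToPowerSeries.ringHom_apply, map_prod]
    apply Finset.prod_congr rfl
    intro m _
    simp only [map_pow, map_sub, map_one, Polynomial.expand_X,
      Polynomial.coeToPowerSeries.ringHom_apply]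
    push_cast
    rw [← pow_mul]
  rw [prodQ, PowerSeries.coeff_mk, hpoly2 k, Polynomial.coeff_coe,
    Polynomial.coeff_expand (by norm_num : 0 < 11)]
  by_cases h : 11 ∣ k
  · rw [if_pos h, if_pos h, ← Polynomial.coeff_coe, ← hpoly k,
      coeff_prod_range (good_pow' 12) (Nat.div_le_self k 11)]
  · rw [if_neg h, if_neg h]

end BrokenDiamondAux


open BrokenDiamondAux

/-- For H(q) = q⁵ ∏_{m≥1} (1-q^{2m})(1-q^{11m})^{13} / ((1-q^m)^3 (1-q^{22m})),
one has U₁₁ H = q · (∑_{n≥0} Δ₅(11n+6) qⁿ) · ∏_{m≥1} (1-q^m)^{12}, where Δ₅ is the broken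
5-diamond partition function, given by
∑ Δ₅(n) qⁿ = ∏_{m≥1} (1-q^{2m})(1-q^{11m}) / ((1-q^m)^3 (1-q^{22m})), and
U₁₁ (∑ a(n) qⁿ) = ∑ a(11n) qⁿ. -/
theorem stmt3 (Δ₅ : ℕ → ℤ) (H : PowerSeries ℤ)
    (hΔ : (PowerSeries.mk Δ₅) * prodQ (fun m => (1 - X ^ m) ^ 3 * (1 - X ^ (22 * m)))
        = prodQ (fun m => (1 - X ^ (2 * m)) * (1 - X ^ (11 * m))))
    (hH : H * prodQ (fun m => (1 - X ^ m) ^ 3 * (1 - X ^ (22 * m)))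
        = X ^ 5 * prodQ (fun m => (1 - X ^ (2 * m)) * (1 - X ^ (11 * m)) ^ 13)) :
    PowerSeries.mk (fun n => PowerSeries.coeff (11 * n) H)
      = X * PowerSeries.mk (fun n => Δ₅ (11 * n + 6)) * prodQ (fun m => (1 - X ^ m) ^ 12) := by
  classical
  have gA : Good (fun m => ((1 : PowerSeries ℤ) - X ^ (2 * m)) * (1 - X ^ (11 * m))) :=
    good_mul (good_one_sub 2 (by norm_num)) (good_one_sub 11 (by norm_num))
  have gB : Good (fun m => ((1 : PowerSeries ℤ) - X ^ (11 * m)) ^ 12) :=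
    good_pow 11 12 (by norm_num)
  have hfam : (fun m => ((1 : PowerSeries ℤ) - X ^ (2 * m)) * (1 - X ^ (11 * m)) ^ 13)
      = fun m => (((1 : PowerSeries ℤ) - X ^ (2 * m)) * (1 - X ^ (11 * m)))
          * ((1 : PowerSeries ℤ) - X ^ (11 * m)) ^ 12 := by
    funext m; ring
  rw [hfam, prodQ_mul gA gB] at hH
  have hCne : prodQ (fun m => ((1 : PowerSeries ℤ) - X ^ m) ^ 3 * (1 - X ^ (22 * m))) ≠ 0 := by
    intro h
    have h0 := constantCoeff_prodQ (fun m => ((1 : PowerSeries ℤ) - X ^ m) ^ 3 * (1 - X ^ (22 * m)))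
    rw [h] at h0
    simp at h0
  have hHeq : H = X ^ 5 * PowerSeries.mk Δ₅
      * prodQ (fun m => ((1 : PowerSeries ℤ) - X ^ (11 * m)) ^ 12) := by
    apply mul_right_cancel₀ hCne
    rw [hH, ← hΔ]
    ring
  rw [hHeq, dil_eq, key]
  congr 1
  ext n
  rw [PowerSeries.coeff_mk]
  cases n with
  | zero => simp [PowerSeries.coeff_X_pow_mul']
  | succ n =>
    rw [PowerSeries.coeff_succ_X_mul, PowerSeries.coeff_mk,
      PowerSeries.coeff_X_pow_mul' _ 5 (11 * (n + 1)), if_pos (by omega : 5 ≤ 11 * (n + 1)),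
      show 11 * (n + 1) - 5 = 11 * n + 6 by omega, PowerSeries.coeff_mk]
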